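/- Let G be a subgraph of the complete bipartite graph K_{m,n} with parts X of size m ≥ 9 and Y of size n ≥ 9. If some vertex of X has degree at least 7 in G, then G contains K_{2,2} or the bipartite complement of G contains K_{4,4}. -/

import Mathlib

/-- `G` (an edge set of a subgraph of `K_{m,n}`) contains `K_{s,t}`:
there are an `s`-subset `A` of the `X`-side and a `t`-subset `B` of the `Y`-side
with every pair in `A × B` an edge. -/
def ContainsK (m n s t : ℕ) (G : Finset (Fin m × Fin n)) : Prop :=
  ∃ A : Finset (Fin m), ∃ B : Finset (Fin n),
    A.card = s ∧ B.card = t ∧ ∀ x ∈ A, ∀ y ∈ B, (x, y) ∈ G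

/-- The bipartite complement of a subgraph of `K_{m,n}`. -/
def bipCompl (m n : ℕ) (G : Finset (Fin m × Fin n)) : Finset (Fin m × Fin n) :=
  Finset.univ \ G

/-- The neighborhood in `Y` of a vertex `x` of the `X`-side. -/
def nbhd (m n : ℕ) (G : Finset (Fin m × Fin n)) (x : Fin m) : Finset (Fin n) :=
  Finset.univ.filter (fun y => (x, y) ∈ G)

/-- The degree of a vertex `x` of the `X`-side. -/
def degX (m n : ℕ) (G : Finset (Fin m × Fin n)) (x : Fin m) : ℕ :=
  (nbhd m n G x).card

lemma key_card (m n : ℕ) (G : Finset (Fin m × Fin n)) (x x' : Fin m) (h : x' ≠ x)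
    (hno : ¬ ContainsK m n 2 2 G) :
    (nbhd m n G x' ∩ nbhd m n G x).card ≤ 1 := by
  by_contra hc
  push_neg at hc
  obtain ⟨y1, hy1, y2, hy2, hne⟩ := Finset.one_lt_card.mp hc
  simp only [nbhd, Finset.mem_inter, Finset.mem_filter, Finset.mem_univ, true_and] at hy1 hy2
  apply hno
  refine ⟨{x', x}, {y1, y2}, ?_, ?_, ?_⟩
  · rw [Finset.card_insert_of_notMem (by simpa using h), Finset.card_singleton]
  · rw [Finset.card_insert_of_notMem (by simpa using hne), Finset.card_singleton]
  · intro a ha y hy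
    rcases Finset.mem_insert.mp ha with rfl | ha
    · rcases Finset.mem_insert.mp hy with rfl | hy
      · exact hy1.1
      · rw [Finset.mem_singleton.mp hy]; exact hy2.1
    · rw [Finset.mem_singleton.mp ha]
      rcases Finset.mem_insert.mp hy with rfl | hy
      · exact hy1.2
      · rw [Finset.mem_singleton.mp hy]; exact hy2.2

/-- If m ≥ 9, n ≥ 9 and some vertex of the X-side of a subgraph G of K_{m,n} has
degree at least 7, then K_{2,2} ⊆ G or K_{4,4} ⊆ complement of G. -/
theorem deg_ge_seven (m n : ℕ) (hm : 9 ≤ m) (hn : 9 ≤ n)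
    (G : Finset (Fin m × Fin n)) (x : Fin m) (hx : 7 ≤ degX m n G x) :
    ContainsK m n 2 2 G ∨ ContainsK m n 4 4 (bipCompl m n G) := by
  by_cases hK : ContainsK m n 2 2 G
  · exact Or.inl hK
  right
  set N := nbhd m n G x with hNdef
  have hN : 7 ≤ N.card := hx
  set S : Finset (Fin m) := Finset.univ.erase x with hSdef
  have hScard : 8 ≤ S.card := by
    rw [hSdef, Finset.card_erase_of_mem (Finset.mem_univ x), Finset.card_univ,
      Fintype.card_fin]
    omega
  have hkey : ∀ x' ∈ S, (nbhd m n G x' ∩ N).card ≤ 1 := by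
    intro x' hx'
    exact key_card m n G x x' (Finset.ne_of_mem_erase hx') hK
  -- main construction
  suffices h : ∃ A : Finset (Fin m), ∃ T : Finset (Fin n),
      A.card = 4 ∧ A ⊆ S ∧ 4 ≤ (N \ T).card ∧
      (∀ x' ∈ A, nbhd m n G x' ∩ N ⊆ T) by
    obtain ⟨A, T, hA4, hAS, hNT, hP⟩ := h
    obtain ⟨B, hBsub, hB4⟩ := Finset.exists_subset_card_eq (show 4 ≤ (N \ T).card from hNT)
    refine ⟨A, B, hA4, hB4, ?_⟩
    intro a ha y hy
    have hyNT := hBsub hy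
    rw [Finset.mem_sdiff] at hyNT
    simp only [bipCompl, Finset.mem_sdiff, Finset.mem_univ, true_and]
    intro hG
    exact hyNT.2 (hP a ha (Finset.mem_inter.mpr ⟨by
      simp [nbhd, hG], hyNT.1⟩))
  have biUnion_card : ∀ A : Finset (Fin m), A ⊆ S →
      (A.biUnion (fun a => nbhd m n G a ∩ N)).card ≤ A.card := by
    intro A hAS
    calc (A.biUnion (fun a => nbhd m n G a ∩ N)).card
        ≤ ∑ a ∈ A, (nbhd m n G a ∩ N).card := Finset.card_biUnion_le
      _ ≤ ∑ a ∈ A, 1 := Finset.sum_le_sum (fun a ha => hkey a (hAS ha))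
      _ = A.card := by simp
  by_cases hN8 : 8 ≤ N.card
  · -- any 4 vertices work
    obtain ⟨A, hAS, hA4⟩ := Finset.exists_subset_card_eq (show 4 ≤ S.card by omega)
    refine ⟨A, A.biUnion (fun a => nbhd m n G a ∩ N), hA4, hAS, ?_, ?_⟩
    · have h1 := biUnion_card A hAS
      have h2 := Finset.le_card_sdiff (A.biUnion (fun a => nbhd m n G a ∩ N)) N
      omega
    · intro x' hx'
      exact fun y hy => Finset.mem_biUnion.mpr ⟨x', hx', hy⟩
  · have hN7 : N.card = 7 := by omega
    by_cases hempty : ∃ x1 ∈ S, nbhd m n G x1 ∩ N = ∅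
    · obtain ⟨x1, hx1S, hx1e⟩ := hempty
      obtain ⟨A', hA'sub, hA'3⟩ := Finset.exists_subset_card_eq (show 3 ≤ (S.erase x1).card by
        rw [Finset.card_erase_of_mem hx1S]; omega)
      have hA'S : A' ⊆ S := hA'sub.trans (Finset.erase_subset _ _)
      have hx1A' : x1 ∉ A' := fun h => Finset.notMem_erase x1 S (hA'sub h)
      refine ⟨insert x1 A', A'.biUnion (fun a => nbhd m n G a ∩ N), ?_, ?_, ?_, ?_⟩
      · rw [Finset.card_insert_of_notMem hx1A', hA'3]
      · exact Finset.insert_subset hx1S hA'S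
      · have h1 := biUnion_card A' hA'S
        have h2 := Finset.le_card_sdiff (A'.biUnion (fun a => nbhd m n G a ∩ N)) N
        omega
      · intro x' hx'
        rcases Finset.mem_insert.mp hx' with rfl | hx'
        · rw [hx1e]; exact Finset.empty_subset _
        · exact fun y hy => Finset.mem_biUnion.mpr ⟨x', hx', hy⟩
    · push_neg at hempty
      -- every vertex in S has a neighbor in N; pigeonhole
      have hne : ∀ a ∈ S, ∃ y, y ∈ nbhd m n G a ∩ N := by
        intro a ha
        rcases Finset.eq_empty_or_nonempty (nbhd m n G a ∩ N) with he | ⟨y, hy⟩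
        · exact absurd he (Finset.nonempty_iff_ne_empty.mp (hempty a ha))
        · exact ⟨y, hy⟩
      have : Nonempty (Fin n) := ⟨⟨0, by omega⟩⟩
      choose f hf using hne
      classical
      set f' : Fin m → Fin n := fun a => if h : a ∈ S then f a h else Classical.arbitrary _
        with hf'def
      have hf'mem : ∀ a ∈ S, f' a ∈ nbhd m n G a ∩ N := by
        intro a ha
        simp only [hf'def, dif_pos ha]
        exact hf a ha
      obtain ⟨x1, hx1S, x2, hx2S, hx12, hfeq⟩ :=
        Finset.exists_ne_map_eq_of_card_lt_of_maps_to (by omega : N.card < S.card)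
          (fun a ha => (Finset.mem_inter.mp (hf'mem a ha)).2)
      obtain ⟨A', hA'sub, hA'2⟩ := Finset.exists_subset_card_eq (show 2 ≤ ((S.erase x1).erase x2).card by
        rw [Finset.card_erase_of_mem (Finset.mem_erase.mpr ⟨(Ne.symm hx12), hx2S⟩),
          Finset.card_erase_of_mem hx1S]
        omega)
      have hA'S : A' ⊆ S := hA'sub.trans ((Finset.erase_subset _ _).trans (Finset.erase_subset _ _))
      have hx2A' : x2 ∉ A' := fun h => Finset.notMem_erase x2 _ (hA'sub h)
      have hx1A' : x1 ∉ A' := fun h =>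
        Finset.notMem_erase x1 S ((Finset.erase_subset _ _) (hA'sub h))
      set T : Finset (Fin n) := insert (f' x1) (A'.biUnion (fun a => nbhd m n G a ∩ N))
        with hTdef
      have hsingle : ∀ a ∈ S, f' a ∈ nbhd m n G a ∩ N → nbhd m n G a ∩ N ⊆ {f' a} := by
        intro a ha hmem y hy
        have := Finset.card_le_one.mp (hkey a ha) y hy (f' a) hmem
        simp [this]
      refine ⟨insert x1 (insert x2 A'), T, ?_, ?_, ?_, ?_⟩
      · rw [Finset.card_insert_of_notMem (by simp [hx12, hx1A']),
          Finset.card_insert_of_notMem hx2A', hA'2]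
      · exact Finset.insert_subset hx1S (Finset.insert_subset hx2S hA'S)
      · have h1 := biUnion_card A' hA'S
        have h2 := Finset.le_card_sdiff T N
        have h3 : T.card ≤ 3 := by
          have := Finset.card_insert_le (f' x1) (A'.biUnion (fun a => nbhd m n G a ∩ N))
          rw [← hTdef] at this
          omega
        omega
      · intro x' hx'
        rcases Finset.mem_insert.mp hx' with rfl | hx'
        · exact (hsingle x' hx1S (hf'mem x' hx1S)).trans (by
            intro y hy; rw [Finset.mem_singleton.mp hy]; exact Finset.mem_insert_self _ _)
        rcases Finset.mem_insert.mp hx' with rfl | hx'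
        · refine (hsingle x' hx2S (hf'mem x' hx2S)).trans ?_
          intro y hy
          rw [Finset.mem_singleton.mp hy, ← hfeq]
          exact Finset.mem_insert_self _ _
        · intro y hy
          exact Finset.mem_insert_of_mem (Finset.mem_biUnion.mpr ⟨x', hx', hy⟩)
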